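/- Let A be a commutative ring containing ℚ, let S = A[[x,y]], and let θ : S → S be the A-linear operator with θ(x^i y^j) = (i−j)·x^i y^j. Let M be an n×n matrix over S each of whose entries is supported on diagonal monomials (coefficient of x^i y^j zero whenever i ≠ j) and whose constant term M₀ := M(0,0) is a strictly upper triangular matrix over A. Define ∇ : Sⁿ → Sⁿ by ∇(v) = θ(v) + M·v, with θ applied entrywise. Then for v ∈ Sⁿ the following are equivalent: (i) for every m ∈ ℕ there exists N ∈ ℕ such that every entry of ∇^N(v) has vanishing coefficient of x^i y^j whenever i + j < m (i.e., ∇^N(v) → 0 in the (x,y)-adic topology); (ii) every entry of v is supported on diagonal monomials. -/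

import Mathlib

/-- The `A`-linear operator `θ = x·∂/∂x − y·∂/∂y` on `A⟦x,y⟧`, determined on monomials by
`θ(x^i y^j) = (i − j) · x^i y^j`. -/
noncomputable def theta {A : Type*} [CommRing A] (f : MvPowerSeries (Fin 2) A) :
    MvPowerSeries (Fin 2) A :=
  fun d => (((d 0 : ℤ) - (d 1 : ℤ) : ℤ) : A) * MvPowerSeries.coeff d f

namespace Stmt9Aux

open MvPowerSeries

variable {A : Type*} [CommRing A] {n : ℕ}

lemma pow_entry_zero (B : Matrix (Fin n) (Fin n) A)
    (h : ∀ i j, j ≤ i → B i j = 0) :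
    ∀ (s : ℕ) (i j : Fin n), (j : ℕ) < (i : ℕ) + s → (B ^ s) i j = 0 := by
  intro s
  induction s with
  | zero =>
    intro i j hj
    rw [pow_zero]
    exact Matrix.one_apply_ne (by intro he; subst he; omega)
  | succ s ih =>
    intro i j hj
    rw [pow_succ, Matrix.mul_apply]
    apply Finset.sum_eq_zero
    intro k _
    by_cases hk : (k : ℕ) < (i : ℕ) + s
    · rw [ih i k hk, zero_mul]
    · rw [h k j (by rw [Fin.le_def]; omega), mul_zero]

lemma pow_n_zero (B : Matrix (Fin n) (Fin n) A) (h : ∀ i j, j ≤ i → B i j = 0) :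
    B ^ n = 0 := by
  ext i j
  rw [pow_entry_zero B h n i j (by omega)]
  simp

variable (M : Matrix (Fin n) (Fin n) (MvPowerSeries (Fin 2) A))
  (D : (Fin n → MvPowerSeries (Fin 2) A) → (Fin n → MvPowerSeries (Fin 2) A))
  (hD : ∀ (v : Fin n → MvPowerSeries (Fin 2) A) (i : Fin n),
      D v i = theta (v i) + M.mulVec v i)

omit [CommRing A] in
lemma finsupp_apply_eq {p q : Fin 2 →₀ ℕ} (h : p + q = (d : Fin 2 →₀ ℕ)) (a : Fin 2) :
    p a + q a = d a := by rw [← h, Finsupp.add_apply]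

include hD in
lemma coeffD (w : Fin n → MvPowerSeries (Fin 2) A) (i : Fin n) (d : Fin 2 →₀ ℕ) :
    MvPowerSeries.coeff d (D w i)
      = (((d 0 : ℤ) - (d 1 : ℤ) : ℤ) : A) * MvPowerSeries.coeff d (w i)
        + ∑ j, ∑ p ∈ Finset.HasAntidiagonal.antidiagonal d,
            MvPowerSeries.coeff p.1 (M i j) * MvPowerSeries.coeff p.2 (w j) := by
  rw [hD, map_add]
  have h2 : MvPowerSeries.coeff d (M.mulVec w i)
      = ∑ j, ∑ p ∈ Finset.HasAntidiagonal.antidiagonal d,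
          MvPowerSeries.coeff p.1 (M i j) * MvPowerSeries.coeff p.2 (w j) := by
    rw [show M.mulVec w i = ∑ j, M i j * w j from rfl, map_sum]
    exact Finset.sum_congr rfl fun j _ => by rw [MvPowerSeries.coeff_mul]
  rw [h2]
  rfl

include hD in
/-- Key computation: if all weight-`k` coefficients of `w` of degree `< r` vanish, then at a
weight-`k` degree-`r` index `d`, the coefficient of `D w` is given by `k • id + M₀`. -/
lemma coeffD_eq (hdiag : ∀ (i j : Fin n) (d : Fin 2 →₀ ℕ), d 0 ≠ d 1 →
      MvPowerSeries.coeff d (M i j) = 0)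
    (k : ℤ) (r : ℕ) (w : Fin n → MvPowerSeries (Fin 2) A)
    (hlow : ∀ (i : Fin n) (d' : Fin 2 →₀ ℕ), (d' 0 : ℤ) - d' 1 = k → d' 0 + d' 1 < r →
      MvPowerSeries.coeff d' (w i) = 0)
    (d : Fin 2 →₀ ℕ) (hdk : (d 0 : ℤ) - d 1 = k) (hdr : d 0 + d 1 = r) (i : Fin n) :
    MvPowerSeries.coeff d (D w i)
      = (k : A) * MvPowerSeries.coeff d (w i)
        + ∑ j, MvPowerSeries.constantCoeff (M i j)
            * MvPowerSeries.coeff d (w j) := by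
  rw [coeffD M D hD, hdk]
  congr 1
  apply Finset.sum_congr rfl
  intro j _
  rw [Finset.sum_eq_single ((0 : Fin 2 →₀ ℕ), d)]
  · rw [MvPowerSeries.coeff_zero_eq_constantCoeff_apply]
  · rintro ⟨p1, p2⟩ hp hne
    simp only [Finset.HasAntidiagonal.mem_antidiagonal] at hp
    have e0 := finsupp_apply_eq (d := d) hp 0
    have e1 := finsupp_apply_eq (d := d) hp 1
    by_cases hp1 : p1 0 = p1 1
    · by_cases h00 : p1 0 = 0
      · have hp10 : p1 = 0 := Finsupp.ext (Fin.forall_fin_two.mpr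
          ⟨by rw [Finsupp.zero_apply]; omega, by rw [Finsupp.zero_apply]; omega⟩)
        have hp2 : p2 = d := by rw [hp10, zero_add] at hp; exact hp
        exact absurd (by rw [hp10, hp2]) hne
      · rw [hlow j p2 (by omega) (by omega), mul_zero]
    · rw [hdiag i j p1 hp1, zero_mul]
  · intro hmem
    exact absurd (Finset.HasAntidiagonal.mem_antidiagonal.mpr (zero_add d)) hmem

include hD in
/-- Vanishing of weight-`k` coefficients below degree `r` is preserved by `D`. -/
lemma low_pres (hdiag : ∀ (i j : Fin n) (d : Fin 2 →₀ ℕ), d 0 ≠ d 1 →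
      MvPowerSeries.coeff d (M i j) = 0)
    (k : ℤ) (r : ℕ) (w : Fin n → MvPowerSeries (Fin 2) A)
    (hlow : ∀ (i : Fin n) (d' : Fin 2 →₀ ℕ), (d' 0 : ℤ) - d' 1 = k → d' 0 + d' 1 < r →
      MvPowerSeries.coeff d' (w i) = 0)
    (i : Fin n) (d' : Fin 2 →₀ ℕ) (hk' : (d' 0 : ℤ) - d' 1 = k) (hr' : d' 0 + d' 1 < r) :
    MvPowerSeries.coeff d' (D w i) = 0 := by
  rw [coeffD M D hD, hlow i d' hk' hr', mul_zero, zero_add]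
  apply Finset.sum_eq_zero
  intro j _
  apply Finset.sum_eq_zero
  rintro ⟨p1, p2⟩ hp
  simp only [Finset.HasAntidiagonal.mem_antidiagonal] at hp
  have e0 := finsupp_apply_eq (d := d') hp 0
  have e1 := finsupp_apply_eq (d := d') hp 1
  by_cases hp1 : p1 0 = p1 1
  · rw [hlow j p2 (by omega) (by omega), mul_zero]
  · rw [hdiag i j p1 hp1, zero_mul]

include hD in
/-- Vanishing of all coefficients below degree `m` is preserved by `D`. -/
lemma low_pres' (m : ℕ) (w : Fin n → MvPowerSeries (Fin 2) A)
    (hlow : ∀ (i : Fin n) (d' : Fin 2 →₀ ℕ), d' 0 + d' 1 < m →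
      MvPowerSeries.coeff d' (w i) = 0)
    (i : Fin n) (d' : Fin 2 →₀ ℕ) (hr' : d' 0 + d' 1 < m) :
    MvPowerSeries.coeff d' (D w i) = 0 := by
  rw [coeffD M D hD, hlow i d' hr', mul_zero, zero_add]
  apply Finset.sum_eq_zero
  intro j _
  apply Finset.sum_eq_zero
  rintro ⟨p1, p2⟩ hp
  simp only [Finset.HasAntidiagonal.mem_antidiagonal] at hp
  have e0 := finsupp_apply_eq (d := d') hp 0
  have e1 := finsupp_apply_eq (d := d') hp 1
  rw [hlow j p2 (by omega), mul_zero]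

include hD in
/-- Diagonal support is preserved by `D`. -/
lemma diag_pres (hdiag : ∀ (i j : Fin n) (d : Fin 2 →₀ ℕ), d 0 ≠ d 1 →
      MvPowerSeries.coeff d (M i j) = 0)
    (w : Fin n → MvPowerSeries (Fin 2) A)
    (hw : ∀ (i : Fin n) (d : Fin 2 →₀ ℕ), d 0 ≠ d 1 → MvPowerSeries.coeff d (w i) = 0)
    (i : Fin n) (d : Fin 2 →₀ ℕ) (hd : d 0 ≠ d 1) :
    MvPowerSeries.coeff d (D w i) = 0 := by
  rw [coeffD M D hD, hw i d hd, mul_zero, zero_add]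
  apply Finset.sum_eq_zero
  intro j _
  apply Finset.sum_eq_zero
  rintro ⟨p1, p2⟩ hp
  simp only [Finset.HasAntidiagonal.mem_antidiagonal] at hp
  have e0 := finsupp_apply_eq (d := d) hp 0
  have e1 := finsupp_apply_eq (d := d) hp 1
  by_cases hp1 : p1 0 = p1 1
  · rw [hw j p2 (by omega), mul_zero]
  · rw [hdiag i j p1 hp1, zero_mul]

end Stmt9Aux

set_option synthInstance.maxHeartbeats 1000000 in
set_option maxHeartbeats 1000000 in
theorem stmt9 (A : Type*) [CommRing A] [Algebra ℚ A] (n : ℕ)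
    (M : Matrix (Fin n) (Fin n) (MvPowerSeries (Fin 2) A))
    (hdiag : ∀ (i j : Fin n) (d : Fin 2 →₀ ℕ), d 0 ≠ d 1 →
      MvPowerSeries.coeff d (M i j) = 0)
    (hupper : ∀ i j : Fin n, j ≤ i →
      MvPowerSeries.constantCoeff (M i j) = 0)
    (D : (Fin n → MvPowerSeries (Fin 2) A) → (Fin n → MvPowerSeries (Fin 2) A))
    (hD : ∀ (v : Fin n → MvPowerSeries (Fin 2) A) (i : Fin n),
      D v i = theta (v i) + M.mulVec v i)
    (v : Fin n → MvPowerSeries (Fin 2) A) :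
    (∀ m : ℕ, ∃ N : ℕ, ∀ (i : Fin n) (d : Fin 2 →₀ ℕ), d 0 + d 1 < m →
        MvPowerSeries.coeff d (D^[N] v i) = 0) ↔
    (∀ (i : Fin n) (d : Fin 2 →₀ ℕ), d 0 ≠ d 1 →
        MvPowerSeries.coeff d (v i) = 0) := by
  classical
  set M₀ : Matrix (Fin n) (Fin n) A :=
    Matrix.of fun i j => MvPowerSeries.constantCoeff (M i j) with hM₀
  have hM₀upper : ∀ i j, j ≤ i → M₀ i j = 0 := hupper
  constructor
  · -- (i) → (ii)
    intro h
    by_contra hc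
    push_neg at hc
    obtain ⟨i₀, d₀, hne, hv0⟩ := hc
    set k : ℤ := (d₀ 0 : ℤ) - d₀ 1 with hk
    have hk0 : k ≠ 0 := by simp only [hk]; omega
    have hP : ∃ r : ℕ, ∃ d : Fin 2 →₀ ℕ, ((d 0 : ℤ) - d 1 = k) ∧ d 0 + d 1 = r ∧
        ∃ i, MvPowerSeries.coeff d (v i) ≠ 0 :=
      ⟨d₀ 0 + d₀ 1, d₀, rfl, rfl, i₀, hv0⟩
    set r : ℕ := Nat.find hP with hr
    obtain ⟨d, hdk, hdr, i₁, hu⟩ := Nat.find_spec hP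
    have hlow : ∀ (i : Fin n) (d' : Fin 2 →₀ ℕ), (d' 0 : ℤ) - d' 1 = k →
        d' 0 + d' 1 < r → MvPowerSeries.coeff d' (v i) = 0 := by
      intro i d' h1 h2
      by_contra hne'
      exact Nat.find_min hP h2 ⟨d', h1, rfl, i, hne'⟩
    set T : Matrix (Fin n) (Fin n) A := (k : A) • (1 : Matrix (Fin n) (Fin n) A) + M₀ with hT
    set u : Fin n → A := fun j => MvPowerSeries.coeff d (v j) with huu
    have inner : ∀ N : ℕ,
        (∀ (i : Fin n) (d' : Fin 2 →₀ ℕ), (d' 0 : ℤ) - d' 1 = k → d' 0 + d' 1 < r →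
          MvPowerSeries.coeff d' (D^[N] v i) = 0) ∧
        (∀ i, MvPowerSeries.coeff d (D^[N] v i) = (T ^ N).mulVec u i) := by
      intro N
      induction N with
      | zero =>
        refine ⟨hlow, fun i => ?_⟩
        simp only [Function.iterate_zero, id_eq, pow_zero, Matrix.one_mulVec]
        rfl
      | succ N ih =>
        constructor
        · intro i d' h1 h2
          rw [Function.iterate_succ_apply']
          exact Stmt9Aux.low_pres M D hD hdiag k r _ ih.1 i d' h1 h2
        · intro i
          rw [Function.iterate_succ_apply',
            Stmt9Aux.coeffD_eq M D hD hdiag k r _ ih.1 d hdk hdr i]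
          have hmv : ∀ x : Fin n → A, T.mulVec x i = (k : A) * x i + ∑ j, M₀ i j * x j := by
            intro x
            rw [hT, Matrix.add_mulVec, Matrix.smul_mulVec, Matrix.one_mulVec]
            simp [Matrix.mulVec, dotProduct]
          have : (T ^ (N + 1)).mulVec u i = T.mulVec ((T ^ N).mulVec u) i := by
            rw [Matrix.mulVec_mulVec, ← pow_succ']
          rw [this, hmv]
          congr 1
          · rw [ih.2 i]
          · exact Finset.sum_congr rfl fun j _ => by rw [ih.2 j]; rfl
    obtain ⟨N, hN⟩ := h (r + 1)
    have hzero : (T ^ N).mulVec u = 0 := by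
      funext i
      rw [← (inner N).2 i]
      exact hN i d (by omega)
    -- T is invertible
    have hkA : IsUnit ((k : A)) := by
      have h1 : algebraMap ℚ A ((k : ℚ)) = (k : A) := map_intCast (algebraMap ℚ A) k
      have h2 : IsUnit ((k : ℚ)) := isUnit_iff_ne_zero.mpr (Int.cast_ne_zero.mpr hk0)
      exact h1 ▸ h2.map (algebraMap ℚ A)
    have hbt : T.BlockTriangular id := by
      intro i j hij
      have hij' : i ≠ j := fun he => by subst he; exact lt_irrefl _ hij
      rw [hT]
      simp only [Matrix.add_apply, Matrix.smul_apply, Matrix.one_apply_ne (Ne.symm hij').symm,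
        smul_zero, zero_add]
      exact hM₀upper i j (le_of_lt hij)
    have hdet : IsUnit T.det := by
      rw [Matrix.det_of_upperTriangular hbt]
      have : ∀ i, T i i = (k : A) := by
        intro i
        rw [hT]
        simp only [Matrix.add_apply, Matrix.smul_apply, Matrix.one_apply_eq, smul_eq_mul,
          mul_one]
        rw [hM₀upper i i le_rfl, add_zero]
      rw [Finset.prod_congr rfl fun i _ => this i, Finset.prod_const]
      exact hkA.pow _
    have hdetN : IsUnit (T ^ N).det := by
      rw [Matrix.det_pow]
      exact hdet.pow _
    have : u = 0 := by
      have h1 : (T ^ N)⁻¹.mulVec ((T ^ N).mulVec u) = u := by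
        rw [Matrix.mulVec_mulVec, Matrix.nonsing_inv_mul _ hdetN, Matrix.one_mulVec]
      rw [← h1, hzero, Matrix.mulVec_zero]
    exact hu (congrFun this i₁)
  · -- (ii) → (i)
    intro hv m
    have diagN : ∀ N (i : Fin n) (d : Fin 2 →₀ ℕ), d 0 ≠ d 1 →
        MvPowerSeries.coeff d (D^[N] v i) = 0 := by
      intro N
      induction N with
      | zero => exact hv
      | succ N ih =>
        intro i d hd
        rw [Function.iterate_succ_apply']
        exact Stmt9Aux.diag_pres M D hD hdiag _ ih i d hd
    have claim : ∀ m : ℕ, ∀ (i : Fin n) (d : Fin 2 →₀ ℕ), d 0 + d 1 < m →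
        MvPowerSeries.coeff d (D^[n * m] v i) = 0 := by
      intro m
      induction m with
      | zero => intro i d hd; omega
      | succ m ih =>
        set w := D^[n * m] v with hw
        have inner : ∀ s : ℕ,
            (∀ (i : Fin n) (d : Fin 2 →₀ ℕ), d 0 + d 1 < m →
              MvPowerSeries.coeff d (D^[s] w i) = 0) ∧
            (∀ d : Fin 2 →₀ ℕ, d 0 + d 1 = m → d 0 = d 1 → ∀ i,
              MvPowerSeries.coeff d (D^[s] w i)
                = (M₀ ^ s).mulVec (fun j => MvPowerSeries.coeff d (w j)) i) := by
          intro s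
          induction s with
          | zero =>
            refine ⟨ih, fun d _ _ i => ?_⟩
            simp only [Function.iterate_zero, id_eq, pow_zero, Matrix.one_mulVec]
          | succ s ihs =>
            constructor
            · intro i d hd
              rw [Function.iterate_succ_apply']
              exact Stmt9Aux.low_pres' M D hD m _ ihs.1 i d hd
            · intro d hdm hdd i
              rw [Function.iterate_succ_apply',
                Stmt9Aux.coeffD_eq M D hD hdiag 0 m _ (fun i d' _ h2 => ihs.1 i d' h2) d
                  (by omega) hdm i]
              rw [Int.cast_zero, zero_mul, zero_add]
              have : (M₀ ^ (s + 1)).mulVec (fun j => MvPowerSeries.coeff d (w j)) i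
                  = M₀.mulVec ((M₀ ^ s).mulVec (fun j => MvPowerSeries.coeff d (w j))) i := by
                rw [Matrix.mulVec_mulVec, ← pow_succ']
              rw [this, show M₀.mulVec ((M₀ ^ s).mulVec (fun j => MvPowerSeries.coeff d (w j))) i
                  = ∑ j, M₀ i j * (M₀ ^ s).mulVec (fun j => MvPowerSeries.coeff d (w j)) j
                  from rfl]
              exact Finset.sum_congr rfl fun j _ => by rw [ihs.2 d hdm hdd j]; rfl
        intro i d hd
        have hiter : D^[n * (m + 1)] v = D^[n] w := by
          rw [hw, show n * (m + 1) = n + n * m by ring, Function.iterate_add_apply]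
        rw [hiter]
        rcases Nat.lt_or_ge (d 0 + d 1) m with hlt | hge
        · exact (inner n).1 i d hlt
        · have hdm : d 0 + d 1 = m := by omega
          by_cases hdd : d 0 = d 1
          · rw [(inner n).2 d hdm hdd i, Stmt9Aux.pow_n_zero M₀ hM₀upper,
              Matrix.zero_mulVec]
            rfl
          · have : D^[n] w = D^[n + n * m] v := by
              rw [hw, Function.iterate_add_apply]
            rw [this]
            exact diagN _ i d hdd
    exact ⟨n * m, claim m⟩
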